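/- Let S be the surface w² = z³ + x⁴z + xy⁵ in P(3,1,1,2). The map δ(w:x:y:z) = (iw : x : e^{2πi/10}y : −z) is an automorphism of S of order 20. -/

import Mathlib

open Function

noncomputable def zeta : ℂ := Complex.exp (2 * (Real.pi : ℂ) * Complex.I / 10)

noncomputable def del : ℂ × ℂ × ℂ × ℂ → ℂ × ℂ × ℂ × ℂ := fun p =>
  (Complex.I * p.1, p.2.1, zeta * p.2.2.1, -p.2.2.2)

lemma del_iter (k : ℕ) (p : ℂ × ℂ × ℂ × ℂ) :
    del^[k] p = (Complex.I ^ k * p.1, p.2.1, zeta ^ k * p.2.2.1, (-1) ^ k * p.2.2.2) := by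
  induction k with
  | zero => simp
  | succ n ih =>
    rw [Function.iterate_succ_apply', ih, del]
    simp only [pow_succ]
    refine Prod.ext ?_ (Prod.ext rfl (Prod.ext ?_ ?_)) <;> simp <;> ring

lemma zeta_pow_five : zeta ^ 5 = -1 := by
  rw [zeta, ← Complex.exp_nat_mul]
  rw [show ((5:ℕ) : ℂ) * (2 * (Real.pi : ℂ) * Complex.I / 10) = Real.pi * Complex.I by push_cast; ring,
    Complex.exp_pi_mul_I]

lemma zeta_pow_eq_one {k : ℕ} (h : zeta ^ k = 1) : 10 ∣ k := by
  rw [zeta, ← Complex.exp_nat_mul, Complex.exp_eq_one_iff] at h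
  obtain ⟨n, hn⟩ := h
  have hc : 2 * (Real.pi : ℂ) * Complex.I / 10 ≠ 0 := by
    apply div_ne_zero _ (by norm_num)
    simp [Real.pi_ne_zero, Complex.I_ne_zero]
  have h2 : (k : ℂ) * (2 * (Real.pi : ℂ) * Complex.I / 10)
      = ((10 * n : ℤ) : ℂ) * (2 * (Real.pi : ℂ) * Complex.I / 10) := by
    push_cast; linear_combination hn
  have h3 : ((k : ℤ) : ℂ) = ((10 * n : ℤ) : ℂ) := by
    push_cast at h2 ⊢
    exact mul_right_cancel₀ hc h2
  have h4 : (k : ℤ) = 10 * n := by exact_mod_cast h3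
  exact Int.ofNat_dvd.mp ⟨n, by exact_mod_cast h4⟩

lemma I_pow_eq_one {k : ℕ} (h : Complex.I ^ k = 1) : 4 ∣ k := by
  have hI : Complex.I = Complex.exp ((Real.pi : ℂ) * Complex.I / 2) := by
    rw [show (Real.pi : ℂ) * Complex.I / 2 = (Real.pi / 2 : ℝ) * Complex.I by push_cast; ring,
      Complex.exp_mul_I]
    rw [← Complex.ofReal_cos, ← Complex.ofReal_sin]
    norm_num
  rw [hI, ← Complex.exp_nat_mul, Complex.exp_eq_one_iff] at h
  obtain ⟨n, hn⟩ := h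
  have hc : (Real.pi : ℂ) * Complex.I / 2 ≠ 0 := by
    apply div_ne_zero _ (by norm_num)
    simp [Real.pi_ne_zero, Complex.I_ne_zero]
  have h2 : (k : ℂ) * ((Real.pi : ℂ) * Complex.I / 2)
      = ((4 * n : ℤ) : ℂ) * ((Real.pi : ℂ) * Complex.I / 2) := by
    push_cast; linear_combination hn
  have h3 : ((k : ℤ) : ℂ) = ((4 * n : ℤ) : ℂ) := mul_right_cancel₀ hc h2
  have h4 : (k : ℤ) = 4 * n := by exact_mod_cast h3
  exact Int.ofNat_dvd.mp ⟨n, by exact_mod_cast h4⟩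

theorem stmt14 :
    let S : Set (ℂ × ℂ × ℂ × ℂ) :=
      {p | p ≠ 0 ∧
        p.1 ^ 2 = p.2.2.2 ^ 3 + p.2.1 ^ 4 * p.2.2.2 + p.2.1 * p.2.2.1 ^ 5}
    let R : ℂ × ℂ × ℂ × ℂ → ℂ × ℂ × ℂ × ℂ → Prop := fun p q =>
      ∃ l : ℂ, l ≠ 0 ∧
        q = (l ^ 3 * p.1, l * p.2.1, l * p.2.2.1, l ^ 2 * p.2.2.2)
    let δ : ℂ × ℂ × ℂ × ℂ → ℂ × ℂ × ℂ × ℂ := fun p =>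
      (Complex.I * p.1, p.2.1,
        Complex.exp (2 * (Real.pi : ℂ) * Complex.I / 10) * p.2.2.1,
        -p.2.2.2)
    (∀ p ∈ S, δ p ∈ S) ∧
    (∀ p, δ^[20] p = p) ∧
    (∀ k : ℕ, 0 < k → k < 20 → ∃ p ∈ S, ¬ R p (δ^[k] p)) := by
  intro S R δ
  have hδ : δ = del := rfl
  refine ⟨?_, ?_, ?_⟩
  · rintro ⟨w, x, y, z⟩ ⟨hne, heq⟩
    refine ⟨?_, ?_⟩
    · intro h
      apply hne
      rw [Prod.ext_iff, Prod.ext_iff, Prod.ext_iff] at h ⊢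
      obtain ⟨h1, h2, h3, h4⟩ := h
      simp only [δ] at h1 h2 h3 h4
      refine ⟨?_, h2, ?_, ?_⟩
      · simpa [Complex.I_ne_zero] using h1
      · simpa [Complex.exp_ne_zero] using h3
      · simpa using h4
    · show (Complex.I * w) ^ 2 = (-z) ^ 3 + x ^ 4 * (-z) + x * (zeta * y) ^ 5
      linear_combination (-1 : ℂ) * heq + w ^ 2 * Complex.I_sq - x * y ^ 5 * zeta_pow_five
  · intro p
    show del^[20] p = p
    rw [del_iter]
    have h1 : Complex.I ^ 20 = 1 := by
      rw [show (20 : ℕ) = 4 * 5 from rfl, pow_mul, Complex.I_pow_four, one_pow]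
    have h2 : zeta ^ 20 = 1 := by
      rw [show (20 : ℕ) = 5 * 4 from rfl, pow_mul, zeta_pow_five]
      norm_num
    have h3 : ((-1 : ℂ)) ^ 20 = 1 := by norm_num
    rw [h1, h2, h3]
    simp
  · intro k hk hk20
    refine ⟨((Real.sqrt 3 : ℝ), 1, 1, 1), ⟨?_, ?_⟩, ?_⟩
    · simp [Prod.ext_iff]
    · show ((Real.sqrt 3 : ℝ) : ℂ) ^ 2 = 1 ^ 3 + 1 ^ 4 * 1 + 1 * 1 ^ 5
      rw [← Complex.ofReal_pow, Real.sq_sqrt (by norm_num : (3:ℝ) ≥ 0)]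
      norm_num
    · rintro ⟨l, hl, hEq⟩
      rw [hδ, del_iter] at hEq
      rw [Prod.ext_iff, Prod.ext_iff, Prod.ext_iff] at hEq
      obtain ⟨h1, h2, h3, h4⟩ := hEq
      simp only [mul_one] at h1 h2 h3 h4
      have hl1 : l = 1 := h2.symm
      subst hl1
      have hs3 : ((Real.sqrt 3 : ℝ) : ℂ) ≠ 0 := by
        simp [Real.sqrt_eq_zero']
      have hI : Complex.I ^ k = 1 := by
        have := mul_right_cancel₀ hs3 (by linear_combination h1 : Complex.I ^ k * ((Real.sqrt 3 : ℝ) : ℂ) = 1 * ((Real.sqrt 3 : ℝ) : ℂ))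
        exact this
      have hz : zeta ^ k = 1 := by simpa using h3
      have d4 : 4 ∣ k := I_pow_eq_one hI
      have d10 : 10 ∣ k := zeta_pow_eq_one hz
      have d20 : 20 ∣ k := by
        have := Nat.lcm_dvd d4 d10
        simpa [show Nat.lcm 4 10 = 20 by norm_num] using this
      omega
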